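/- Assume (A1) and (A2). A nonzero complex number λ is an eigenvalue of 𝒦 if and only if −λ is an eigenvalue of 𝒦, and in that case their algebraic multiplicities coincide. Moreover, the sum of the algebraic multiplicities of all nonzero eigenvalues of 𝒦 is at most 2n₀. (Equivalently: there are at most 2n₀ resonances counted with multiplicity, and ξ is a resonance if and only if ξ + π is.) -/

import Mathlib

open Complex Matrix

noncomputable section

/-- states: `ℂ²` -/
abbrev C2 : Type := Fin 2 → ℂ

/-- `P n = |L⟩⟨L| U n` -/
def Pmat (U : ℤ → Matrix (Fin 2) (Fin 2) ℂ) (n : ℤ) : Matrix (Fin 2) (Fin 2) ℂ :=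
  Matrix.of fun i j => if i = 0 then U n 0 j else 0

/-- `Q n = |R⟩⟨R| U n` -/
def Qmat (U : ℤ → Matrix (Fin 2) (Fin 2) ℂ) (n : ℤ) : Matrix (Fin 2) (Fin 2) ℂ :=
  Matrix.of fun i j => if i = 1 then U n 1 j else 0

/-- the time evolution operator `𝒰`: `(𝒰ψ)(n) = P_{n+1}ψ(n+1) + Q_{n-1}ψ(n-1)` -/
def QWop (U : ℤ → Matrix (Fin 2) (Fin 2) ℂ) (ψ : ℤ → C2) : ℤ → C2 :=
  fun n => (Pmat U (n + 1)).mulVec (ψ (n + 1)) + (Qmat U (n - 1)).mulVec (ψ (n - 1))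

/-- all local coins are unitary -/
def CoinsUnitary (U : ℤ → Matrix (Fin 2) (Fin 2) ℂ) : Prop :=
  ∀ n : ℤ, U n ∈ Matrix.unitaryGroup (Fin 2) ℂ

/-- Assumption (A1): `U n = I₂` outside `[n₀] = {0,…,n₀}` -/
def A1 (n0 : ℕ) (U : ℤ → Matrix (Fin 2) (Fin 2) ℂ) : Prop :=
  ∀ n : ℤ, n < 0 ∨ (n0 : ℤ) < n → U n = 1

/-- Assumption (A2): `a n ≠ 0` for all `n` -/
def A2 (U : ℤ → Matrix (Fin 2) (Fin 2) ℂ) : Prop :=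
  ∀ n : ℤ, U n 0 0 ≠ 0

/-- the restriction `𝒦` of `𝒰` to `ℓ²([n₀];ℂ²) ≅ ℂ^{2(n₀+1)}`, as a matrix:
`(𝒦v)(n) = P_{n+1}v(n+1) + Q_{n-1}v(n-1)` with the convention that out-of-range terms vanish. -/
def Kmat (n0 : ℕ) (U : ℤ → Matrix (Fin 2) (Fin 2) ℂ) :
    Matrix (Fin (n0 + 1) × Fin 2) (Fin (n0 + 1) × Fin 2) ℂ :=
  Matrix.of fun p q =>
    (if p.2 = 0 ∧ (q.1 : ℕ) = (p.1 : ℕ) + 1 then U (((p.1 : ℕ) : ℤ) + 1) 0 q.2 else 0) +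
    (if p.2 = 1 ∧ (q.1 : ℕ) + 1 = (p.1 : ℕ) then U ((q.1 : ℕ) : ℤ) 1 q.2 else 0)

/-- `μ` is an eigenvalue of `𝒦` -/
def HasEig (n0 : ℕ) (U : ℤ → Matrix (Fin 2) (Fin 2) ℂ) (μ : ℂ) : Prop :=
  ∃ v : Fin (n0 + 1) × Fin 2 → ℂ, v ≠ 0 ∧ (Kmat n0 U).mulVec v = μ • v

/-- the algebraic multiplicity of `μ` as an eigenvalue of `𝒦`:
`dim ker (𝒦 - μI)^{2(n₀+1)}` -/
def algMult (n0 : ℕ) (U : ℤ → Matrix (Fin 2) (Fin 2) ℂ) (μ : ℂ) : ℕ :=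
  Module.finrank ℂ
    (LinearMap.ker (Matrix.mulVecLin ((Kmat n0 U - μ • 1) ^ (2 * (n0 + 1)))))

/-- `ψ` solves the generalized eigenvalue equation `𝒰ψ = μψ` (pointwise on `ℤ`) -/
def IsSol (U : ℤ → Matrix (Fin 2) (Fin 2) ℂ) (μ : ℂ) (ψ : ℤ → C2) : Prop :=
  ∀ n : ℤ, QWop U ψ n = μ • ψ n

/-- the local transfer matrix `T n ξ` -/
def Tmat (U : ℤ → Matrix (Fin 2) (Fin 2) ℂ) (ξ : ℂ) (n : ℤ) : Matrix (Fin 2) (Fin 2) ℂ :=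
  !![Complex.exp (Complex.I * ξ) / (starRingEnd ℂ) (U n 0 0),
      -((starRingEnd ℂ) (U n 1 0)) / (starRingEnd ℂ) (U n 0 0);
    -(U n 1 0) / U n 1 1, Complex.exp (-(Complex.I * ξ)) / U n 1 1]

/-- the global transfer matrix `𝕋(ξ) = T₀(ξ)T₁(ξ)⋯T_{n₀}(ξ)` -/
def TT (n0 : ℕ) (U : ℤ → Matrix (Fin 2) (Fin 2) ℂ) (ξ : ℂ) : Matrix (Fin 2) (Fin 2) ℂ :=
  ((List.range (n0 + 1)).map fun k => Tmat U ξ (k : ℤ)).prod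

/-- the Wronskian-type determinant `𝒲_n(ψ₁,ψ₂) = det(Π_nψ₁, Π_nψ₂)` where
`Π_nψ = (⟨L|ψ(n)⟩, ⟨R|ψ(n+1)⟩)ᵀ` -/
def Wr (ψ₁ ψ₂ : ℤ → C2) (n : ℤ) : ℂ :=
  ψ₁ n 0 * ψ₂ (n + 1) 1 - ψ₂ n 0 * ψ₁ (n + 1) 1

/-- outgoing state -/
def Outgoing (n0 : ℕ) (ψ : ℤ → C2) : Prop :=
  ∀ n : ℕ, ψ (-(n : ℤ)) 1 = 0 ∧ ψ ((n0 : ℤ) + n) 0 = 0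

/-- member of `ℋ^out_N` -/
def OutgoingFrom (n0 : ℕ) (N : ℕ) (ψ : ℤ → C2) : Prop :=
  ∀ n : ℕ, N ≤ n → ψ (-(n : ℤ)) 1 = 0 ∧ ψ ((n0 : ℤ) + n) 0 = 0

/-- incoming state -/
def Incoming (n0 : ℕ) (φ : ℤ → C2) : Prop :=
  ∀ n : ℕ, φ (-(n : ℤ)) 0 = 0 ∧ φ ((n0 : ℤ) + n) 1 = 0

/-- the pairing `⟨φ, ψ⟩ = Σ_{n∈ℤ} (φ(n), ψ(n))_{ℂ²}` -/
def pairing (φ ψ : ℤ → C2) : ℂ :=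
  ∑' n : ℤ, ∑ i : Fin 2, (starRingEnd ℂ) (φ n i) * ψ n i

/-- restriction of a state to `[n₀]` -/
def resK (n0 : ℕ) (ψ : ℤ → C2) : Fin (n0 + 1) × Fin 2 → ℂ :=
  fun p => ψ ((p.1 : ℕ) : ℤ) p.2

/-- the Jost solution `ψ_out^-(·;ξ)`: solution equal to `e^{-inξ}|L⟩` for `n ≤ -1` -/
def JostOutMinus (U : ℤ → Matrix (Fin 2) (Fin 2) ℂ) (ξ : ℂ) (ψ : ℤ → C2) : Prop :=
  IsSol U (Complex.exp (-(Complex.I * ξ))) ψ ∧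
    ∀ n : ℤ, n ≤ -1 → ψ n = ![Complex.exp (-(Complex.I * (n : ℂ) * ξ)), 0]

/-- the Jost solution `ψ_out^+(·;ξ)`: solution equal to `e^{inξ}|R⟩` for `n ≥ n₀+1` -/
def JostOutPlus (n0 : ℕ) (U : ℤ → Matrix (Fin 2) (Fin 2) ℂ) (ξ : ℂ) (ψ : ℤ → C2) : Prop :=
  IsSol U (Complex.exp (-(Complex.I * ξ))) ψ ∧
    ∀ n : ℤ, (n0 : ℤ) + 1 ≤ n → ψ n = ![0, Complex.exp (Complex.I * (n : ℂ) * ξ)]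

/-- the Jost solution `ψ_in^-(·;ξ)`: solution equal to `e^{inξ}|R⟩` for `n ≤ -1` -/
def JostInMinus (U : ℤ → Matrix (Fin 2) (Fin 2) ℂ) (ξ : ℂ) (ψ : ℤ → C2) : Prop :=
  IsSol U (Complex.exp (-(Complex.I * ξ))) ψ ∧
    ∀ n : ℤ, n ≤ -1 → ψ n = ![0, Complex.exp (Complex.I * (n : ℂ) * ξ)]

/-- the Jost solution `ψ_in^+(·;ξ)`: solution equal to `e^{-inξ}|L⟩` for `n ≥ n₀+1` -/
def JostInPlus (n0 : ℕ) (U : ℤ → Matrix (Fin 2) (Fin 2) ℂ) (ξ : ℂ) (ψ : ℤ → C2) : Prop :=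
  IsSol U (Complex.exp (-(Complex.I * ξ))) ψ ∧
    ∀ n : ℤ, (n0 : ℤ) + 1 ≤ n → ψ n = ![Complex.exp (-(Complex.I * (n : ℂ) * ξ)), 0]


namespace Stmt11Aux

variable {n0 : ℕ} {U : ℤ → Matrix (Fin 2) (Fin 2) ℂ}

lemma sum_finrank_le_of_iSupIndep {ι : Type*} {W : Type*} [AddCommGroup W] [Module ℂ W]
    [FiniteDimensional ℂ W] {p : ι → Submodule ℂ W} (h : iSupIndep p) (s : Finset ι) :
    ∑ i ∈ s, Module.finrank ℂ (p i) ≤ Module.finrank ℂ W := by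
  classical
  have key : ∑ i ∈ s, Module.finrank ℂ (p i) = Module.finrank ℂ ↥(s.sup p) := by
    induction s using Finset.cons_induction with
    | empty => rw [Finset.sum_empty, Finset.sup_empty]; simp
    | cons a s ha ih =>
        rw [Finset.sum_cons, Finset.sup_cons, ih]
        have hdisj : Disjoint (p a) (s.sup p) := by
          refine Disjoint.mono_right ?_ (h.disjoint_biSup (y := (s : Set ι)) (by simpa using ha))
          rw [Finset.sup_eq_iSup]
          exact iSup₂_le fun i hi => le_iSup₂ (f := fun i (_ : i ∈ (s : Set ι)) => p i) i hi
        have := Submodule.finrank_sup_add_finrank_inf_eq (p a) (s.sup p)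
        rw [disjoint_iff.mp hdisj] at this
        simp only [finrank_bot, add_zero] at this
        omega
  rw [key]
  exact Submodule.finrank_le _

def D (n0 : ℕ) : Matrix (Fin (n0 + 1) × Fin 2) (Fin (n0 + 1) × Fin 2) ℂ :=
  Matrix.diagonal fun p => (-1 : ℂ) ^ (p.1 : ℕ)

lemma D_sq (n0 : ℕ) : D n0 * D n0 = 1 := by
  rw [D, Matrix.diagonal_mul_diagonal]
  have : (fun p : Fin (n0+1) × Fin 2 => (-1 : ℂ) ^ (p.1 : ℕ) * (-1) ^ (p.1 : ℕ)) = fun _ => 1 := by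
    funext p
    rw [← pow_add, ← two_mul, pow_mul, neg_one_sq, one_pow]
  rw [this, Matrix.diagonal_one]

lemma KD_anticomm : Kmat n0 U * D n0 = -(D n0 * Kmat n0 U) := by
  ext p q
  rw [D, Matrix.mul_diagonal, Matrix.neg_apply, Matrix.diagonal_mul]
  show (Kmat n0 U p q) * _ = -(_ * Kmat n0 U p q)
  rw [Kmat]
  simp only [Matrix.of_apply]
  split_ifs with h1 h2 h2
  · omega
  · rw [h1.2, pow_succ]; ring
  · rw [← h2.2, pow_succ]; ring
  · ring

lemma DKD : D n0 * Kmat n0 U * D n0 = -Kmat n0 U := by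
  rw [mul_assoc, KD_anticomm, mul_neg, ← mul_assoc, D_sq, one_mul]

lemma DAD (μ : ℂ) :
    D n0 * (Kmat n0 U - μ • 1) * D n0 = -(Kmat n0 U - (-μ) • 1) := by
  rw [mul_sub, sub_mul, DKD, Matrix.mul_smul, mul_one, Matrix.smul_mul, D_sq]
  rw [neg_smul, sub_neg_eq_add]
  abel

lemma conj_pow (μ : ℂ) (N : ℕ) (hN : Even N) :
    (Kmat n0 U - (-μ) • 1) ^ N = D n0 * (Kmat n0 U - μ • 1) ^ N * D n0 := by
  have key : ∀ k : ℕ, (D n0 * (Kmat n0 U - μ • 1) * D n0) ^ k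
      = D n0 * (Kmat n0 U - μ • 1) ^ k * D n0 := by
    intro k
    induction k with
    | zero => simp [D_sq]
    | succ k ih =>
        rw [pow_succ, ih, pow_succ]
        simp only [mul_assoc]
        rw [← mul_assoc (D n0) (D n0), D_sq, one_mul]
  rw [← key, DAD, hN.neg_pow]

lemma hasEig_neg (μ : ℂ) (h : HasEig n0 U μ) : HasEig n0 U (-μ) := by
  obtain ⟨v, hv0, hv⟩ := h
  refine ⟨(D n0).mulVec v, ?_, ?_⟩
  · intro h0
    apply hv0
    have : (D n0 * D n0).mulVec v = (D n0).mulVec ((D n0).mulVec v) :=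
      (Matrix.mulVec_mulVec v (D n0) (D n0)).symm
    rw [h0, Matrix.mulVec_zero, D_sq, Matrix.one_mulVec] at this
    exact this
  · rw [Matrix.mulVec_mulVec, KD_anticomm, Matrix.neg_mulVec,
      ← Matrix.mulVec_mulVec, hv, Matrix.mulVec_smul, neg_smul, ← neg_smul]

lemma mulVecLin_pow (A : Matrix (Fin (n0 + 1) × Fin 2) (Fin (n0 + 1) × Fin 2) ℂ) (k : ℕ) :
    Matrix.mulVecLin (A ^ k) = (Matrix.mulVecLin A) ^ k := by
  induction k with
  | zero => rw [pow_zero, pow_zero, Matrix.mulVecLin_one]; rfl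
  | succ k ih => rw [pow_succ, Matrix.mulVecLin_mul, ih, pow_succ, Module.End.mul_eq_comp]

lemma mulVecLin_shift (μ : ℂ) (k : ℕ) :
    Matrix.mulVecLin ((Kmat n0 U - μ • 1) ^ k)
      = (Matrix.mulVecLin (Kmat n0 U) - μ • 1) ^ k := by
  rw [mulVecLin_pow]
  congr 1
  apply LinearMap.ext
  intro v
  rw [Matrix.mulVecLin_apply, Matrix.sub_mulVec, Matrix.smul_mulVec, Matrix.one_mulVec,
    LinearMap.sub_apply, LinearMap.smul_apply, Matrix.mulVecLin_apply]
  rfl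

lemma algMult_neg (μ : ℂ) : algMult n0 U μ = algMult n0 U (-μ) := by
  set N := 2 * (n0 + 1) with hNdef
  have hN : Even N := even_two_mul _
  set g := Matrix.mulVecLin (D n0) with hg
  have hgg : g.comp g = LinearMap.id := by
    rw [hg, ← Matrix.mulVecLin_mul, D_sq, Matrix.mulVecLin_one]
  have hker : LinearMap.ker g = ⊥ := by
    rw [LinearMap.ker_eq_bot]
    intro a b hab
    have ha := DFunLike.congr_fun hgg a
    have hb := DFunLike.congr_fun hgg b
    simp only [LinearMap.comp_apply, LinearMap.id_apply] at ha hb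
    rw [← ha, ← hb, hab]
  set e : (Fin (n0 + 1) × Fin 2 → ℂ) ≃ₗ[ℂ] (Fin (n0 + 1) × Fin 2 → ℂ) :=
    LinearEquiv.ofLinear g g hgg hgg with he
  unfold algMult
  rw [← hNdef, conj_pow μ N hN, Matrix.mulVecLin_mul, Matrix.mulVecLin_mul,
    LinearMap.ker_comp, LinearMap.ker_comp_of_ker_eq_bot _ hker]
  have hcomap : Submodule.comap g
      (LinearMap.ker (Matrix.mulVecLin ((Kmat n0 U - μ • 1) ^ N)))
      = Submodule.map (e.symm : _ →ₗ[ℂ] _)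
        (LinearMap.ker (Matrix.mulVecLin ((Kmat n0 U - μ • 1) ^ N))) := by
    rw [Submodule.map_equiv_eq_comap_symm]
    rfl
  rw [hcomap, LinearEquiv.finrank_map_eq]

lemma rowL (q : Fin (n0 + 1) × Fin 2) : Kmat n0 U (Fin.last n0, (0 : Fin 2)) q = 0 := by
  have hq := q.1.isLt
  simp only [Kmat, Matrix.of_apply, Fin.val_last]
  rw [if_neg, if_neg]
  · ring
  · rintro ⟨h, -⟩; exact absurd h (by decide)
  · rintro ⟨-, h⟩; omega

lemma rowR (q : Fin (n0 + 1) × Fin 2) : Kmat n0 U ((0 : Fin (n0 + 1)), (1 : Fin 2)) q = 0 := by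
  simp only [Kmat, Matrix.of_apply]
  rw [if_neg, if_neg]
  · ring
  · rintro ⟨-, h⟩; simp at h
  · rintro ⟨h, -⟩; exact absurd h (by decide)

def phi (n0 : ℕ) : (Fin (n0 + 1) × Fin 2 → ℂ) →ₗ[ℂ] ℂ × ℂ :=
  LinearMap.prod (LinearMap.proj (Fin.last n0, (0 : Fin 2)))
    (LinearMap.proj ((0 : Fin (n0 + 1)), (1 : Fin 2)))

lemma phi_surj : Function.Surjective (phi n0) := by
  rintro ⟨a, b⟩
  refine ⟨Pi.single (Fin.last n0, (0 : Fin 2)) a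
    + Pi.single ((0 : Fin (n0 + 1)), (1 : Fin 2)) b, ?_⟩
  have hne : ((Fin.last n0, (0 : Fin 2)) : Fin (n0+1) × Fin 2)
      ≠ ((0 : Fin (n0 + 1)), (1 : Fin 2)) := by
    intro h
    have h2 : (0 : Fin 2) = 1 := congrArg Prod.snd h
    exact absurd h2 (by decide)
  simp [phi, Pi.single_apply, hne, hne.symm]

lemma range_K_le : LinearMap.range (Matrix.mulVecLin (Kmat n0 U)) ≤ LinearMap.ker (phi n0) := by
  rintro x ⟨y, rfl⟩
  have h1 : (Kmat n0 U).mulVec y (Fin.last n0, (0 : Fin 2)) = 0 := by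
    apply Finset.sum_eq_zero
    intro q _
    simp [rowL]
  have h2 : (Kmat n0 U).mulVec y ((0 : Fin (n0 + 1)), (1 : Fin 2)) = 0 := by
    apply Finset.sum_eq_zero
    intro q _
    simp [rowR]
  simp only [LinearMap.mem_ker, phi, LinearMap.prod_apply, Pi.prod, LinearMap.proj_apply]
  rw [Matrix.mulVecLin_apply]
  exact Prod.ext h1 h2

lemma finrank_V : Module.finrank ℂ (Fin (n0 + 1) × Fin 2 → ℂ) = 2 * (n0 + 1) := by
  rw [Module.finrank_fintype_fun_eq_card, Fintype.card_prod, Fintype.card_fin, Fintype.card_fin]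
  ring

lemma two_le_finrank_ker_pow :
    2 ≤ Module.finrank ℂ
      (LinearMap.ker (Matrix.mulVecLin ((Kmat n0 U) ^ (2 * (n0 + 1))))) := by
  set B := Matrix.mulVecLin ((Kmat n0 U) ^ (2 * (n0 + 1)))
  have hV : Module.finrank ℂ (Fin (n0 + 1) × Fin 2 → ℂ) = 2 * (n0 + 1) := finrank_V
  have e1 := LinearMap.finrank_range_add_finrank_ker B
  have e2 := LinearMap.finrank_range_add_finrank_ker (phi n0)
  have hrphi : Module.finrank ℂ (LinearMap.range (phi n0)) = 2 := by
    rw [LinearMap.range_eq_top.mpr phi_surj, finrank_top, Module.finrank_prod,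
      Module.finrank_self]
  have hexp : 2 * (n0 + 1) - 1 + 1 = 2 * (n0 + 1) := by omega
  have hBle : LinearMap.range B ≤ LinearMap.ker (phi n0) := by
    rintro x ⟨y, rfl⟩
    apply range_K_le
    refine ⟨(Kmat n0 U ^ (2 * (n0 + 1) - 1)).mulVec y, ?_⟩
    simp only [B, Matrix.mulVecLin_apply]
    rw [Matrix.mulVec_mulVec, ← pow_succ', hexp]
  have hle2 : Module.finrank ℂ (LinearMap.range B)
      ≤ Module.finrank ℂ (LinearMap.ker (phi n0)) := Submodule.finrank_mono hBle
  omega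

end Stmt11Aux

/-- symmetry `λ ↔ -λ` of the nonzero spectrum of `𝒦` (with equal
algebraic multiplicities), and the total multiplicity is at most `2n₀`. -/
theorem stmt_11 (n0 : ℕ) (U : ℤ → Matrix (Fin 2) (Fin 2) ℂ)
    (hU : CoinsUnitary U) (hA1 : A1 n0 U) (hA2 : A2 U) :
    (∀ μ : ℂ, μ ≠ 0 → (HasEig n0 U μ ↔ HasEig n0 U (-μ))) ∧
    (∀ μ : ℂ, μ ≠ 0 → HasEig n0 U μ → algMult n0 U μ = algMult n0 U (-μ)) ∧
    ∀ S : Finset ℂ, (∀ μ ∈ S, μ ≠ 0 ∧ HasEig n0 U μ) →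
      ∑ μ ∈ S, algMult n0 U μ ≤ 2 * n0 := by
  classical
  set N : ℕ := 2 * (n0 + 1) with hNdef
  have halg : ∀ μ : ℂ, algMult n0 U μ = Module.finrank ℂ
      (Module.End.genEigenspace (Matrix.mulVecLin (Kmat n0 U)) μ (N : ℕ∞)) := by
    intro μ
    rw [Module.End.genEigenspace_nat, algMult, Stmt11Aux.mulVecLin_shift]
  refine ⟨?_, ?_, ?_⟩
  · intro μ _
    exact ⟨Stmt11Aux.hasEig_neg μ, fun h => by simpa using Stmt11Aux.hasEig_neg (-μ) h⟩
  · intro μ _ _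
    exact Stmt11Aux.algMult_neg μ
  · intro S hS
    have h0S : (0 : ℂ) ∉ S := fun h => (hS 0 h).1 rfl
    have hsum := Stmt11Aux.sum_finrank_le_of_iSupIndep
      (Module.End.independent_genEigenspace (Matrix.mulVecLin (Kmat n0 U)) (N : ℕ∞))
      (insert 0 S)
    rw [Finset.sum_insert h0S, Stmt11Aux.finrank_V] at hsum
    have hS' : ∑ μ ∈ S, algMult n0 U μ = ∑ μ ∈ S, Module.finrank ℂ
        (Module.End.genEigenspace (Matrix.mulVecLin (Kmat n0 U)) μ (N : ℕ∞)) :=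
      Finset.sum_congr rfl fun μ _ => halg μ
    have h0 : 2 ≤ Module.finrank ℂ
        (Module.End.genEigenspace (Matrix.mulVecLin (Kmat n0 U)) (0 : ℂ) (N : ℕ∞)) := by
      rw [← halg 0]
      have : Kmat n0 U - (0 : ℂ) • 1 = Kmat n0 U := by rw [zero_smul, sub_zero]
      rw [algMult, this]
      exact Stmt11Aux.two_le_finrank_ker_pow
    rw [hS']
    omega
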